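/- Let p ≥ q ≥ 1 with p ≥ 2, let L be the equation px + qy = z, and let t be a non-negative integer with t < ((p+q−1)/(p+q+p/q))·⌊n/(p+q)⌋. Then every L-free subset S of [n] with min(S) = ⌊n/(p+q)⌋ − t satisfies |S| ≤ ⌈(p+q−1)n/(p+q)⌉ − ⌊pt/q⌋. -/

import Mathlib

theorem stmt13 (p q n t : ℕ) (hq : 1 ≤ q) (hpq : q ≤ p) (hp : 2 ≤ p)
    (ht : (t : ℚ) <
      (((p : ℚ) + q - 1) / ((p : ℚ) + q + (p : ℚ) / q)) * ((n / (p + q) : ℕ) : ℚ))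
    (S : Finset ℕ) (hS : S ⊆ Finset.Icc 1 n)
    (hfree : ¬ ∃ x ∈ S, ∃ y ∈ S, ∃ z ∈ S, p * x + q * y = z)
    (hmin : S.min = ((n / (p + q) - t : ℕ) : WithTop ℕ)) :
    S.card ≤ ⌈(((p : ℚ) + q - 1) * n) / ((p : ℚ) + q)⌉₊ - p * t / q := by
  classical
  have hq0 : 0 < q := hq
  set m := n / (p + q) with hm
  set a := m - t with ha
  set T := p * t / q with hT
  -- rational positivity facts
  have hqQ : (0:ℚ) < (q:ℚ) := by exact_mod_cast hq0
  have hcQ : (0:ℚ) < (p:ℚ) + (q:ℚ) := by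
    have h1 : (1:ℚ) ≤ (p:ℚ) := by exact_mod_cast (by omega : 1 ≤ p)
    linarith
  have hBpos : (0:ℚ) < (p:ℚ) + q + (p:ℚ)/q := by
    have : (0:ℚ) ≤ (p:ℚ)/q := by positivity
    linarith
  -- key rational inequality
  have hkeyQ : (t:ℚ) * ((q:ℚ)*((p:ℚ)+q) + p) < (q:ℚ) * (((p:ℚ)+q) - 1) * m := by
    rw [div_mul_eq_mul_div, lt_div_iff₀ hBpos] at ht
    have h2 := mul_lt_mul_of_pos_right ht hqQ
    have hBq : ((p:ℚ)+q+(p:ℚ)/q) * q = (q:ℚ)*((p:ℚ)+q) + p := by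
      field_simp
    rw [mul_assoc, hBq] at h2
    linarith [h2]
  -- integer version
  have key' : t * (q*(p+q) + p) + 1 ≤ q * ((p+q) - 1) * m := by
    have hcast : (↑(t * (q*(p+q)+p)) : ℚ) < ↑(q * ((p+q)-1) * m) := by
      push_cast [Nat.cast_sub (show 1 ≤ p + q by omega)]
      linarith [hkeyQ]
    exact Nat.lt_iff_add_one_le.mp (by exact_mod_cast hcast)
  have hm0 : m ≠ 0 := by
    intro h; rw [h, mul_zero] at key'
    exact Nat.not_succ_le_zero _ key'
  have htm : t < m := by
    have h5 : q*((p+q)-1)*m ≤ (q*(p+q)+p)*m :=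
      Nat.mul_le_mul (le_trans (Nat.mul_le_mul le_rfl (Nat.sub_le _ _)) (Nat.le_add_right _ p)) le_rfl
    have h6 : (q*(p+q)+p)*t < (q*(p+q)+p)*m := by
      have : t * (q*(p+q)+p) < (q*(p+q)+p)*m := by omega
      calc (q*(p+q)+p)*t = t*(q*(p+q)+p) := mul_comm _ _
        _ < (q*(p+q)+p)*m := this
    exact lt_of_mul_lt_mul_left h6 (Nat.zero_le _)
  have hmsplit : m = a + t := by omega
  -- the crucial lower bound on q*(p+q)*a
  have h2n : q*m + p*t + 1 ≤ q*(p+q)*a := by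
    have e1 : q*((p+q)-1)*m + q*m = q*(p+q)*m := by
      obtain ⟨u, hu⟩ : ∃ u, p + q = u + 1 := ⟨p+q-1, by omega⟩
      rw [hu]; simp [Nat.add_sub_cancel]; ring
    have e2 : q*(p+q)*m = q*(p+q)*a + q*(p+q)*t := by rw [hmsplit]; ring
    have e3 : t*(q*(p+q)+p) = q*(p+q)*t + p*t := by ring
    linarith [key', e1, e2, e3]
  have h3m : (p+q)*m ≤ n := by
    calc (p+q)*m = m*(p+q) := mul_comm _ _
      _ ≤ n := Nat.div_mul_le_self n (p+q)
  have hLn : (p+q)*a ≤ n := le_trans (Nat.mul_le_mul le_rfl (by omega : a ≤ m)) h3m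
  have hpan : p*a ≤ n := le_trans (Nat.mul_le_mul (Nat.le_add_right p q) le_rfl) hLn
  have h4' : p*a + (q*m + p*t) ≤ n := by
    have e : p*a + (q*m + p*t) = (p+q)*m := by rw [hmsplit]; ring
    rw [e]; exact h3m
  have h4 : q*m + p*t ≤ n - p*a := Nat.le_sub_of_add_le (by linarith [h4'])
  set K := (n - p*a)/q with hK
  have hmTK : m + T ≤ K := by
    have hdiv : (q*m + p*t)/q ≤ K := Nat.div_le_div_right h4
    have e : (q*m + p*t)/q = m + T := by
      rw [Nat.add_comm (q*m) (p*t), Nat.add_mul_div_left _ _ hq0, Nat.add_comm]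
    rw [e] at hdiv; exact hdiv
  have hfub : ∀ y, y ≤ K → p*a + q*y ≤ n := by
    intro y hy
    have h1 : q*y ≤ q*K := Nat.mul_le_mul le_rfl hy
    have h2 : K * q ≤ n - p*a := Nat.div_mul_le_self _ _
    have h3 : q*y ≤ n - p*a := by
      calc q*y ≤ q*K := h1
        _ = K*q := mul_comm _ _
        _ ≤ n - p*a := h2
    calc p*a + q*y ≤ p*a + (n - p*a) := Nat.add_le_add_left h3 _
      _ = n := Nat.add_sub_cancel' hpan
  -- facts about S
  have haS : a ∈ S := Finset.mem_of_min hmin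
  have hge : ∀ y ∈ S, a ≤ y := by
    intro y hy
    have h := Finset.min_le hy
    rw [hmin] at h
    exact WithTop.coe_le_coe.mp h
  have hyn : ∀ y ∈ S, y ≤ n := fun y hy => (Finset.mem_Icc.mp (hS hy)).2
  -- split S at K, map the lower part
  set S₁ := S.filter (fun y => y ≤ K) with hS₁
  set S₂ := S.filter (fun y => ¬ y ≤ K) with hS₂
  have hsplit : S₁.card + S₂.card = S.card := Finset.card_filter_add_card_filter_not _
  set f : ℕ → ℕ := fun y => p*a + q*y with hf
  have hfinj : Function.Injective f := by
    intro y z h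
    simp only [hf] at h
    exact Nat.eq_of_mul_eq_mul_left hq0 (Nat.add_left_cancel h)
  set B := S₁.image f with hB
  have hBcard : B.card = S₁.card := Finset.card_image_of_injective _ hfinj
  have hBprop : ∀ b ∈ B, (p+q)*a ≤ b ∧ b ≤ n ∧ b ∉ S := by
    intro b hb
    obtain ⟨y, hy, rfl⟩ := Finset.mem_image.mp hb
    obtain ⟨hyS, hyK⟩ := Finset.mem_filter.mp hy
    refine ⟨?_, hfub y hyK, ?_⟩
    · have hqa : q*a ≤ q*y := Nat.mul_le_mul le_rfl (hge y hyS)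
      calc (p+q)*a = p*a + q*a := by ring
        _ ≤ p*a + q*y := Nat.add_le_add_left hqa _
    · intro hmem
      exact hfree ⟨a, haS, y, hyS, p*a + q*y, hmem, rfl⟩
  have hmain : S.card + (m + T) ≤ n := by
    by_cases hcase : (p+q)*a ≤ K
    · -- low case: all of S below (p+q)*a injects into S₁, images fill [(p+q)a, n]
      set Slo := S.filter (fun y => y < (p+q)*a) with hSlo
      set Shi := S.filter (fun y => ¬ y < (p+q)*a) with hShi
      have hsplit2 : Slo.card + Shi.card = S.card :=
        Finset.card_filter_add_card_filter_not _
      have hlosub : Slo ⊆ S₁ := by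
        intro y hy
        obtain ⟨h1, h2⟩ := Finset.mem_filter.mp hy
        exact Finset.mem_filter.mpr ⟨h1, le_trans (Nat.le_of_lt h2) hcase⟩
      have hlole : Slo.card ≤ S₁.card := Finset.card_le_card hlosub
      have hdisj : Disjoint Shi B := by
        rw [Finset.disjoint_left]
        intro b hb hbB
        exact (hBprop b hbB).2.2 (Finset.mem_filter.mp hb).1
      have hsub : Shi ∪ B ⊆ Finset.Icc ((p+q)*a) n := by
        intro b hb
        rcases Finset.mem_union.mp hb with h | h
        · obtain ⟨h1, h2⟩ := Finset.mem_filter.mp h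
          exact Finset.mem_Icc.mpr ⟨Nat.le_of_not_lt h2, hyn b h1⟩
        · exact Finset.mem_Icc.mpr ⟨(hBprop b h).1, (hBprop b h).2.1⟩
      have hcards : Shi.card + B.card ≤ n + 1 - (p+q)*a := by
        have h1 := Finset.card_le_card hsub
        rw [Finset.card_union_of_disjoint hdisj, Nat.card_Icc] at h1
        exact h1
      have hqT : q*T ≤ p*t := by
        calc q*T = T*q := mul_comm _ _
          _ ≤ p*t := Nat.div_mul_le_self _ _
      have hmTL : m + T < (p+q)*a := by
        have hlt : q*(m+T) < q*((p+q)*a) := by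
          have e1 : q*(m+T) = q*m + q*T := by ring
          have e2 : q*((p+q)*a) = q*(p+q)*a := by ring
          linarith [h2n, hqT]
        exact lt_of_mul_lt_mul_left hlt (Nat.zero_le _)
      omega
    · push_neg at hcase
      have hdisj : Disjoint S₂ B := by
        rw [Finset.disjoint_left]
        intro b hb hbB
        exact (hBprop b hbB).2.2 (Finset.mem_filter.mp hb).1
      have hsub : S₂ ∪ B ⊆ Finset.Icc (K+1) n := by
        intro b hb
        rcases Finset.mem_union.mp hb with h | h
        · obtain ⟨h1, h2⟩ := Finset.mem_filter.mp h
          exact Finset.mem_Icc.mpr ⟨by omega, hyn b h1⟩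
        · refine Finset.mem_Icc.mpr ⟨?_, (hBprop b h).2.1⟩
          have := (hBprop b h).1
          omega
      have hcards : S₂.card + B.card ≤ n + 1 - (K+1) := by
        have h1 := Finset.card_le_card hsub
        rw [Finset.card_union_of_disjoint hdisj, Nat.card_Icc] at h1
        exact h1
      have hKn : K ≤ n := le_trans (Nat.div_le_self _ _) (Nat.sub_le _ _)
      omega
  -- compute the ceiling
  have hmod : n % (p+q) < p+q := Nat.mod_lt _ (by omega)
  have hdm := Nat.div_add_mod n (p+q)
  have hn2 : n < (p+q)*(m+1) := by
    calc n = (p+q)*m + n % (p+q) := hdm.symm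
      _ < (p+q)*m + (p+q) := Nat.add_lt_add_left hmod _
      _ = (p+q)*(m+1) := by ring
  have h3mn : 3*m ≤ n := le_trans (Nat.mul_le_mul (by omega : 3 ≤ p+q) le_rfl) h3m
  have hceil : ⌈(((p:ℚ)+q-1)*n)/((p:ℚ)+q)⌉₊ = n - m := by
    have hne : n - m ≠ 0 := by omega
    rw [Nat.ceil_eq_iff hne]
    have c1 : ((p:ℚ)+q)*m ≤ (n:ℚ) := by exact_mod_cast h3m
    have c2 : (n:ℚ) < ((p:ℚ)+q)*((m:ℚ)+1) := by exact_mod_cast hn2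
    constructor
    · rw [lt_div_iff₀ hcQ]
      push_cast [Nat.cast_sub (show m ≤ n by omega), Nat.cast_sub (show 1 ≤ n - m by omega)]
      nlinarith [c2]
    · rw [div_le_iff₀ hcQ]
      push_cast [Nat.cast_sub (show m ≤ n by omega)]
      nlinarith [c1]
  rw [hceil]
  omega
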